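/- arXiv:2301.13321 — 2 statements merged into one kernel-verified Lean document; each statement's English description precedes it below -/
import Mathlib

section
/- Let v₀, v₁ be independent Uniform[0,1] and let r ∈ [0, 1/2]. If bidder 1 tips t(v₁) = v₁/2 − r for v₁ > 2r (else 0), and bidder 0 wins iff v₀ ≥ t(v₁) + r, then the seller's expected revenue equals r·(1 − r²), which equals the expected revenue of posting a take-it-or-leave-it price r to two independent Uniform[0,1] buyers. -/
open MeasureTheory Set

lemma posted_price_integral (r : ℝ) (h0 : 0 ≤ r) (h1 : r ≤ 1) :
    (∫ p in (Icc (0:ℝ) 1 ×ˢ Icc (0:ℝ) 1),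
        (if r ≤ p.1 ∨ r ≤ p.2 then r else (0:ℝ))) = r * (1 - r ^ 2) := by
  set A : Set (ℝ × ℝ) := Icc (0:ℝ) 1 ×ˢ Icc (0:ℝ) 1 with hA
  set S : Set (ℝ × ℝ) := {p : ℝ × ℝ | r ≤ p.1 ∨ r ≤ p.2} with hS
  have hSmeas : MeasurableSet S := by
    apply MeasurableSet.union
    · exact measurableSet_le measurable_const measurable_fst
    · exact measurableSet_le measurable_const measurable_snd
  have hind : ∀ p : ℝ × ℝ, (if r ≤ p.1 ∨ r ≤ p.2 then r else (0:ℝ))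
      = S.indicator (fun _ => r) p := by
    intro p
    rw [Set.indicator_apply]
    simp only [hS, Set.mem_setOf_eq]
  simp_rw [hind]
  rw [MeasureTheory.setIntegral_indicator hSmeas, setIntegral_const, smul_eq_mul, mul_comm]
  congr 1
  -- compute (volume (A ∩ S)).toReal = 1 - r^2
  have hAS : A ∩ S = A \ (Ico (0:ℝ) r ×ˢ Ico (0:ℝ) r) := by
    ext p
    simp only [hA, hS, Set.mem_inter_iff, Set.mem_diff, Set.mem_prod, Set.mem_Icc,
      Set.mem_Ico, Set.mem_setOf_eq]
    constructor
    · rintro ⟨⟨⟨h01, h11⟩, h02, h12⟩, h⟩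
      refine ⟨⟨⟨h01, h11⟩, h02, h12⟩, ?_⟩
      rcases h with h | h
      · rintro ⟨⟨_, h'⟩, _⟩; linarith
      · rintro ⟨_, _, h'⟩; linarith
    · rintro ⟨⟨⟨h01, h11⟩, h02, h12⟩, h⟩
      refine ⟨⟨⟨h01, h11⟩, h02, h12⟩, ?_⟩
      by_contra hc
      push_neg at hc
      exact h ⟨⟨h01, hc.1⟩, h02, hc.2⟩
  have hsub : Ico (0:ℝ) r ×ˢ Ico (0:ℝ) r ⊆ A := by
    rintro p ⟨⟨h01, h11⟩, h02, h12⟩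
    exact ⟨⟨h01, by linarith⟩, h02, by linarith⟩
  have hvolT : volume (Ico (0:ℝ) r ×ˢ Ico (0:ℝ) r) = ENNReal.ofReal (r * r) := by
    rw [Measure.volume_eq_prod, MeasureTheory.Measure.prod_prod, Real.volume_Ico]
    simp [← ENNReal.ofReal_mul h0]
  have hvolA : volume A = 1 := by
    rw [hA, Measure.volume_eq_prod, MeasureTheory.Measure.prod_prod]
    simp
  rw [hAS, measureReal_def, measure_diff hsub (by measurability) (by rw [hvolT]; exact ENNReal.ofReal_ne_top),
    hvolA, hvolT]
  rw [show (1 : ENNReal) = ENNReal.ofReal 1 from by simp, ← ENNReal.ofReal_sub _ (by positivity),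
    ENNReal.toReal_ofReal (by nlinarith)]
  ring

/-- Corollary 5.2 (revenue): with reserve price `r ∈ [0,1/2]`, tip `t(v₁) = v₁/2 − r`
for `v₁ > 2r` (else 0), and bidder 0 winning iff `v₀ ≥ t(v₁) + r`, the seller's expected
revenue (the winner pays exactly `r` whenever a sale occurs) equals `r·(1 − r²)`,
which equals the expected revenue of posting a take-it-or-leave-it price `r`. -/
theorem seller_revenue_equals_posted_price (r : ℝ) (hr : r ∈ Set.Icc (0:ℝ) (1/2))
    (t : ℝ → ℝ) (ht : ∀ v, t v = if 2 * r < v then v / 2 - r else 0) :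
    (∫ p in (Icc (0:ℝ) 1 ×ˢ Icc (0:ℝ) 1),
        (if t p.2 + r ≤ p.1 ∨ r ≤ p.2 then r else 0)) = r * (1 - r ^ 2) ∧
    (∫ p in (Icc (0:ℝ) 1 ×ˢ Icc (0:ℝ) 1),
        (if r ≤ p.1 ∨ r ≤ p.2 then r else 0)) = r * (1 - r ^ 2) := by
  obtain ⟨h0, h12⟩ := hr
  have h1 : r ≤ 1 := by linarith
  have key := posted_price_integral r h0 h1
  refine ⟨?_, key⟩
  rw [← key]
  apply MeasureTheory.integral_congr_ae
  apply Filter.Eventually.of_forall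
  intro p
  show (if t p.2 + r ≤ p.1 ∨ r ≤ p.2 then r else (0:ℝ)) = (if r ≤ p.1 ∨ r ≤ p.2 then r else 0)
  rcases le_or_gt r p.2 with h | h
  · rw [if_pos (Or.inr h), if_pos (Or.inr h)]
  · have htz : t p.2 = 0 := by
      rw [ht, if_neg (by linarith)]
    rw [htz, zero_add]
end

section
/- Let n ≥ 2, and define t(v) = (1/(2n))·(vⁿ − v̲ⁿ) for v ≥ v̲ and t(v) = 0 otherwise, where v̲ ∈ (0,1) solves (n+1)·v̲ⁿ/(n(n−1)) − v̲^(n+1)/(n+1) − 1/(n(n+1)) = 0. Then: (a) t(v) ≤ v/n for all v ∈ [0,1]; (b) if V ~ Uniform[0,1], then E[t(V)] = v̲ⁿ/(n(n−1)). -/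
open MeasureTheory Set

/-- Proposition 5.3: the symmetric equilibrium tipping function
`t(v) = (1/(2n))(vⁿ − v̲ⁿ)` for `v ≥ v̲` (else 0) satisfies `t(v) ≤ v/n` on `[0,1]`,
and its mean under `Uniform[0,1]` equals `v̲ⁿ/(n(n−1))`. -/
theorem equilibrium_tip_properties (n : ℕ) (hn : 2 ≤ n) (vbar : ℝ)
    (hvbar : vbar ∈ Set.Ioo (0:ℝ) 1)
    (hroot : (n + 1) * vbar ^ n / (n * (n - 1)) - vbar ^ (n + 1) / (n + 1)
      - 1 / (n * (n + 1)) = 0)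
    (t : ℝ → ℝ)
    (ht : ∀ v, t v = if vbar ≤ v then (1 / (2 * n)) * (v ^ n - vbar ^ n) else 0) :
    (∀ v ∈ Set.Icc (0:ℝ) 1, t v ≤ v / n) ∧
    (∫ v in Icc (0:ℝ) 1, t v) = vbar ^ n / (n * (n - 1)) := by
  obtain ⟨hb0, hb1⟩ := hvbar
  have hnR : (2:ℝ) ≤ (n:ℝ) := by exact_mod_cast hn
  have hnpos : (0:ℝ) < (n:ℝ) := by linarith
  have hn1 : (n:ℝ) - 1 ≠ 0 := by linarith
  have hn2 : (n:ℝ) + 1 ≠ 0 := by linarith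
  have hn0 : (n:ℝ) ≠ 0 := ne_of_gt hnpos
  constructor
  · rintro v ⟨hv0, hv1⟩
    rw [ht]
    split_ifs with h
    · have hvn : v ^ n ≤ v := pow_le_of_le_one hv0 hv1 (by omega)
      have hbn : (0:ℝ) ≤ vbar ^ n := by positivity
      calc (1 / (2 * (n:ℝ))) * (v ^ n - vbar ^ n)
          ≤ (1 / (2 * (n:ℝ))) * v := by
            apply mul_le_mul_of_nonneg_left (by linarith) (by positivity)
        _ = v / (2 * n) := by ring
        _ ≤ v / n := by gcongr <;> linarith
    · positivity
  · have hteq : t = fun v => (1 / (2 * (n:ℝ))) * ((max v vbar) ^ n - vbar ^ n) := by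
      funext v
      rw [ht]
      split_ifs with h
      · rw [max_eq_left h]
      · rw [max_eq_right (le_of_not_ge h)]; ring
    have hcont : Continuous t := by
      rw [hteq]
      exact continuous_const.mul
        (((continuous_id.max continuous_const).pow n).sub continuous_const)
    have h1 : (∫ v in Icc (0:ℝ) 1, t v) = ∫ v in (0:ℝ)..1, t v := by
      rw [intervalIntegral.integral_of_le zero_le_one, integral_Icc_eq_integral_Ioc]
    rw [h1, ← intervalIntegral.integral_add_adjacent_intervals (a := (0:ℝ)) (b := vbar)
      (c := 1) (hcont.intervalIntegrable _ _) (hcont.intervalIntegrable _ _)]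
    have h2 : ∫ v in (0:ℝ)..vbar, t v = 0 := by
      rw [intervalIntegral.integral_congr (g := fun _ => (0:ℝ)) ?_]
      · simp
      · intro v hv
        rw [uIcc_of_le hb0.le] at hv
        rw [ht]
        split_ifs with h
        · have : v = vbar := le_antisymm hv.2 h
          simp [this]
        · rfl
    have h3 : ∫ v in vbar..(1:ℝ), t v
        = (1 / (2 * (n:ℝ))) * ((1 - vbar ^ (n + 1)) / ((n:ℝ) + 1) - vbar ^ n * (1 - vbar)) := by
      rw [intervalIntegral.integral_congr
        (g := fun v => (1 / (2 * (n:ℝ))) * (v ^ n - vbar ^ n)) ?_]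
      · rw [intervalIntegral.integral_const_mul,
          intervalIntegral.integral_sub (intervalIntegral.intervalIntegrable_pow n)
            intervalIntegrable_const,
          integral_pow, intervalIntegral.integral_const, smul_eq_mul]
        push_cast
        ring
      · intro v hv
        rw [uIcc_of_le hb1.le] at hv
        rw [ht, if_pos hv.1]
    have hpoly : ((n:ℝ)+1)^2 * vbar ^ n - (n:ℝ)*((n:ℝ)-1) * vbar ^ (n+1) - ((n:ℝ)-1) = 0 := by
      have h := hroot
      field_simp at h
      apply mul_left_cancel₀ (mul_ne_zero hn0 hn2)
      linear_combination ((n:ℝ)*((n:ℝ)+1)) * h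
    rw [h2, h3]
    field_simp
    linear_combination (-1:ℝ) * hpoly
end
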